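/- arXiv:1210.5380 — 2 statements merged into one kernel-verified Lean document; each statement's English description precedes it below -/
import Mathlib

section
/- Let x₀, x ∈ V and R₀, ρ > 0 with ‖x − x₀‖ ≥ 2R₀ and B(x, ρ) ∩ B(x₀, R₀) ≠ ∅. Put y = x₀ + (3R₀/(2‖x − x₀‖))·(x − x₀). Then ‖y − x₀‖ = 3R₀/2 and the open ball B(y, R₀/2) is contained in B(x, ρ). -/
/-- in a real normed vector space, if `‖x − x₀‖ ≥ 2R₀` and
`B(x,ρ) ∩ B(x₀,R₀) ≠ ∅`, then the point `y = x₀ + (3R₀ / (2‖x − x₀‖)) • (x − x₀)` satisfies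
`‖y − x₀‖ = 3R₀/2` and `B(y, R₀/2) ⊆ B(x, ρ)`. -/
theorem ball_on_segment_subset
    (V : Type*) [NormedAddCommGroup V] [NormedSpace ℝ V]
    (x₀ x : V) (R₀ ρ : ℝ) (hR₀ : 0 < R₀) (hρ : 0 < ρ)
    (hfar : 2 * R₀ ≤ ‖x - x₀‖)
    (hmeet : (Metric.ball x ρ ∩ Metric.ball x₀ R₀).Nonempty) :
    ‖(x₀ + (3 * R₀ / (2 * ‖x - x₀‖)) • (x - x₀)) - x₀‖ = 3 * R₀ / 2 ∧
      Metric.ball (x₀ + (3 * R₀ / (2 * ‖x - x₀‖)) • (x - x₀)) (R₀ / 2) ⊆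
        Metric.ball x ρ := by
  set d := ‖x - x₀‖ with hd
  have hdpos : 0 < d := lt_of_lt_of_le (by linarith) hfar
  set c := 3 * R₀ / (2 * d) with hc
  have hcpos : 0 < c := by positivity
  have hc1 : c ≤ 3 / 4 := by
    rw [hc, div_le_div_iff₀ (by positivity) (by norm_num)]
    nlinarith
  have hnorm1 : ‖(x₀ + c • (x - x₀)) - x₀‖ = 3 * R₀ / 2 := by
    have : (x₀ + c • (x - x₀)) - x₀ = c • (x - x₀) := by abel
    rw [this, norm_smul, Real.norm_eq_abs, abs_of_pos hcpos, ← hd, hc]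
    field_simp
  refine ⟨hnorm1, ?_⟩
  obtain ⟨w, hw1, hw2⟩ := hmeet
  rw [Metric.mem_ball, dist_eq_norm] at hw1 hw2
  have hdρ : d < ρ + R₀ := by
    calc d = ‖(x - w) + (w - x₀)‖ := by rw [hd]; congr 1; abel
    _ ≤ ‖x - w‖ + ‖w - x₀‖ := norm_add_le _ _
    _ < ρ + R₀ := by
        have : ‖x - w‖ = ‖w - x‖ := by rw [← norm_neg]; congr 1; abel
        linarith [this]
  intro z hz
  rw [Metric.mem_ball, dist_eq_norm] at hz ⊢
  have hyx : ‖x - (x₀ + c • (x - x₀))‖ = d - 3 * R₀ / 2 := by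
    have h1 : x - (x₀ + c • (x - x₀)) = (1 - c) • (x - x₀) := by
      rw [sub_smul, one_smul]; abel
    rw [h1, norm_smul, Real.norm_eq_abs, abs_of_pos (by linarith), ← hd, hc]
    field_simp
  calc ‖z - x‖ = ‖(z - (x₀ + c • (x - x₀))) - (x - (x₀ + c • (x - x₀)))‖ := by
        congr 1; abel
    _ ≤ ‖z - (x₀ + c • (x - x₀))‖ + ‖x - (x₀ + c • (x - x₀))‖ := norm_sub_le _ _
    _ < R₀ / 2 + (d - 3 * R₀ / 2) := by rw [hyx]; linarith
    _ < ρ := by linarith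
end

section
/- Suppose that for each n ≥ 1, r_n : ℝ^d → [0,∞) is Lebesgue measurable and r_n(x) → 0 as n → ∞ for every x ∈ ℝ^d. Then ∫_{ℝ^d} ∫_{ℝ^d} f(x) f(y) 1{‖x − y‖ ≤ 3 max(r_n(x), r_n(y))} dy dx → 0 as n → ∞. -/
open MeasureTheory Filter

noncomputable instance piLpMeasurableSpace (p : ENNReal) (d : ℕ) :
    MeasurableSpace (PiLp p (fun _ : Fin d => ℝ)) :=
  MeasurableSpace.comap (WithLp.ofLp (p := p)) (inferInstance : MeasurableSpace (Fin d → ℝ))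

noncomputable instance piLpMeasureSpace (p : ENNReal) (d : ℕ) :
    MeasureSpace (PiLp p (fun _ : Fin d => ℝ)) :=
  ⟨Measure.map (WithLp.toLp p) (volume : Measure (Fin d → ℝ))⟩

instance piLpBorelSpace (p : ENNReal) (d : ℕ) :
    BorelSpace (PiLp p (fun _ : Fin d => ℝ)) := PiLp.borelSpace p

/-- if `r_n(x) → 0` pointwise, then
`∫∫ f(x) f(y) 1{‖x−y‖ ≤ 3 max(r_n(x), r_n(y))} dy dx → 0`. -/
theorem double_integral_tendsto_zero
    (d : ℕ) (hd : 1 ≤ d) (p : ENNReal) [Fact (1 ≤ p)]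
    (f : PiLp p (fun _ : Fin d => ℝ) → ℝ)
    (hf_meas : Measurable f) (hf_nonneg : ∀ x, 0 ≤ f x)
    (hf_int : Integrable f) (hf_prob : ∫ y, f y = 1)
    (r : ℕ → PiLp p (fun _ : Fin d => ℝ) → ℝ)
    (hr_meas : ∀ n, Measurable (r n)) (hr_nonneg : ∀ n x, 0 ≤ r n x)
    (hr_lim : ∀ x, Tendsto (fun n => r n x) atTop (nhds 0)) :
    Tendsto
      (fun n : ℕ => ∫ x, ∫ y,
        (if dist x y ≤ 3 * max (r n x) (r n y) then f x * f y else 0))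
      atTop (nhds 0) := by
  haveI : NullSingletonClass (volume : Measure (Fin d → ℝ)) := Measure.pi_noAtoms ⟨0, hd⟩
  haveI : NullSingletonClass (volume : Measure (PiLp p (fun _ : Fin d => ℝ))) :=
    ⟨fun x => by
      show Measure.map (WithLp.toLp p) (volume : Measure (Fin d → ℝ)) {x} = 0
      rw [Measure.map_apply (WithLp.measurable_toLp p _) (measurableSet_singleton x)]
      exact ((Set.subsingleton_singleton).preimage (WithLp.toLp_injective p)).measure_zero _⟩
  haveI : SigmaFinite (volume : Measure (PiLp p (fun _ : Fin d => ℝ))) :=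
    (MeasurableEquiv.toLp p (Fin d → ℝ)).sigmaFinite_map (μ := (volume : Measure (Fin d → ℝ)))
  set μ : Measure (PiLp p (fun _ : Fin d => ℝ)) := volume with hμ
  set g : ℕ → (PiLp p (fun _ : Fin d => ℝ)) × (PiLp p (fun _ : Fin d => ℝ)) → ℝ := fun n z =>
    if dist z.1 z.2 ≤ 3 * max (r n z.1) (r n z.2) then f z.1 * f z.2 else 0 with hg
  have hgmeas : ∀ n, Measurable (g n) := by
    intro n
    refine Measurable.ite ?_ ((hf_meas.comp measurable_fst).mul (hf_meas.comp measurable_snd))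
      measurable_const
    exact measurableSet_le (measurable_fst.dist measurable_snd)
      ((((hr_meas n).comp measurable_fst).max ((hr_meas n).comp measurable_snd)).const_mul 3)
  have hbound : ∀ n, ∀ z : (PiLp p (fun _ : Fin d => ℝ)) × (PiLp p (fun _ : Fin d => ℝ)),
      ‖g n z‖ ≤ f z.1 * f z.2 := by
    intro n z
    rw [Real.norm_eq_abs]
    simp only [hg]
    split
    · rw [abs_of_nonneg (mul_nonneg (hf_nonneg _) (hf_nonneg _))]
    · simpa using mul_nonneg (hf_nonneg z.1) (hf_nonneg z.2)
  have hprodint : Integrable (fun z : (PiLp p (fun _ : Fin d => ℝ)) × (PiLp p (fun _ : Fin d => ℝ))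
      => f z.1 * f z.2) (μ.prod μ) :=
    hf_int.mul_prod hf_int
  have hgint : ∀ n, Integrable (g n) (μ.prod μ) := fun n =>
    (hprodint.mono' (hgmeas n).aestronglyMeasurable (Filter.Eventually.of_forall (hbound n)))
  have hdiag : ∀ᵐ z : (PiLp p (fun _ : Fin d => ℝ)) × (PiLp p (fun _ : Fin d => ℝ)) ∂(μ.prod μ),
      z.1 ≠ z.2 := by
    have hms : MeasurableSet {z : (PiLp p (fun _ : Fin d => ℝ)) × (PiLp p (fun _ : Fin d => ℝ)) |
        z.1 = z.2} := measurableSet_eq_fun measurable_fst measurable_snd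
    rw [ae_iff]
    have he : {z : (PiLp p (fun _ : Fin d => ℝ)) × (PiLp p (fun _ : Fin d => ℝ)) | ¬ z.1 ≠ z.2}
        = {z : (PiLp p (fun _ : Fin d => ℝ)) × (PiLp p (fun _ : Fin d => ℝ)) | z.1 = z.2} := by
      ext z; simp
    rw [he, Measure.prod_apply hms]
    have hz : ∀ x : PiLp p (fun _ : Fin d => ℝ),
        μ (Prod.mk x ⁻¹' {z : (PiLp p (fun _ : Fin d => ℝ)) ×
          (PiLp p (fun _ : Fin d => ℝ)) | z.1 = z.2}) = 0 := by
      intro x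
      have h1 : Prod.mk x ⁻¹' {z : (PiLp p (fun _ : Fin d => ℝ)) ×
          (PiLp p (fun _ : Fin d => ℝ)) | z.1 = z.2} = {x} := by
        ext y; simp [eq_comm]
      rw [h1]
      exact measure_singleton x
    simp [hz]
  have hptwise : ∀ᵐ z : (PiLp p (fun _ : Fin d => ℝ)) × (PiLp p (fun _ : Fin d => ℝ)) ∂(μ.prod μ),
      Tendsto (fun n => g n z) atTop (nhds 0) := by
    filter_upwards [hdiag] with z hz
    have hdpos : 0 < dist z.1 z.2 := dist_pos.mpr hz
    have hmax : Tendsto (fun n => 3 * max (r n z.1) (r n z.2)) atTop (nhds 0) := by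
      have h2 := ((hr_lim z.1).max (hr_lim z.2)).const_mul 3
      simpa using h2
    have hev : ∀ᶠ n in atTop, g n z = 0 := by
      filter_upwards [hmax.eventually_lt_const hdpos] with n hn
      simp only [hg]
      rw [if_neg (not_le.mpr hn)]
    exact Tendsto.congr' (by filter_upwards [hev] with n hn; exact hn.symm) tendsto_const_nhds
  have hmain : Tendsto (fun n => ∫ z, g n z ∂(μ.prod μ)) atTop (nhds 0) := by
    have h3 := tendsto_integral_of_dominated_convergence
      (fun z : (PiLp p (fun _ : Fin d => ℝ)) × (PiLp p (fun _ : Fin d => ℝ)) => f z.1 * f z.2)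
      (fun n => (hgmeas n).aestronglyMeasurable) hprodint
      (fun n => Filter.Eventually.of_forall (hbound n)) hptwise
    simpa using h3
  refine hmain.congr fun n => ?_
  rw [← MeasureTheory.integral_prod _ (hgint n)]
end
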